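/- Let H ∈ (0,1/2) and C^H(s,t) := (1/2)(t^{2H}+s^{2H}−|t−s|^{2H}) on [0,2]^2. Then there does not exist a super-additive map ω on rectangles, vanishing on degenerate rectangles, such that |C^H(R)|^{1/(2H)} ≤ ω(R) for all rectangles R ⊆ [0,2]^2 and such that ω([s,t]^2) = C·(t−s) for some constant C for all 0 ≤ s ≤ t ≤ 2. -/

import Mathlib

open Set
open scoped ENNReal NNReal

/-- A closed rectangle `[a,b] × [c,d] ⊆ ℝ²`, encoded by its four corner coordinates. -/
structure Rect where
  a : ℝ
  b : ℝ
  c : ℝ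
  d : ℝ

noncomputable instance : DecidableEq Rect := fun _ _ => Classical.dec _

/-- The closed rectangle as a subset of the plane. -/
def Rect.toSet (R : Rect) : Set (ℝ × ℝ) := Set.Icc R.a R.b ×ˢ Set.Icc R.c R.d

/-- The open interior of the rectangle. -/
def Rect.openSet (R : Rect) : Set (ℝ × ℝ) := Set.Ioo R.a R.b ×ˢ Set.Ioo R.c R.d

/-- The rectangle is well formed: `a ≤ b`, `c ≤ d`. -/
def Rect.Valid (R : Rect) : Prop := R.a ≤ R.b ∧ R.c ≤ R.d

/-- Rectangular increment of `f` over `[a,b] × [c,d]`. -/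
def Rect.inc (f : ℝ × ℝ → ℝ) (R : Rect) : ℝ :=
  f (R.b, R.d) - f (R.a, R.d) - f (R.b, R.c) + f (R.a, R.c)

/-- `P` is a partition of `R` into essentially disjoint rectangles. -/
def IsPartition (R : Rect) (P : Finset Rect) : Prop :=
  (∀ Q ∈ P, Q.Valid) ∧
  ((P : Set Rect).Pairwise fun Q Q' => Disjoint Q.openSet Q'.openSet) ∧
  (⋃ Q ∈ P, Q.toSet) = R.toSet

/-- The controlled `p`-variation of `f` over `R`, raised to the power `p`:
`sup` over all partitions of `R` into essentially disjoint rectangles of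
`Σ |f(A)|^p`.  So `|f|_{p-var;R} = (cVarSum p f R) ^ (1/p)`. -/
noncomputable def cVarSum (p : ℝ) (f : ℝ × ℝ → ℝ) (R : Rect) : ℝ≥0∞ :=
  ⨆ (P : Finset Rect) (_ : IsPartition R P),
    ∑ Q ∈ P, ENNReal.ofReal |Rect.inc f Q| ^ p

/-- The grid `p`-variation of `f` over `R`, raised to the power `p`:
`sup` over grid-like partitions (products of dissections of the two sides)
of `Σ_{i,j} |f([t_i,t_{i+1}] × [s_j,s_{j+1}])|^p`.
So `V_p(f;R) = (gridVarSum p f R) ^ (1/p)`. -/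
noncomputable def gridVarSum (p : ℝ) (f : ℝ × ℝ → ℝ) (R : Rect) : ℝ≥0∞ :=
  ⨆ (n : ℕ) (m : ℕ) (t : Fin (n+1) → ℝ) (s : Fin (m+1) → ℝ)
    (_ : Monotone t) (_ : Monotone s)
    (_ : t 0 = R.a) (_ : t (Fin.last n) = R.b)
    (_ : s 0 = R.c) (_ : s (Fin.last m) = R.d),
    ∑ i : Fin n, ∑ j : Fin m,
      ENNReal.ofReal |Rect.inc f ⟨t i.castSucc, t i.succ, s j.castSucc, s j.succ⟩| ^ p

/-- The covariance of fractional Brownian motion with Hurst parameter `H`: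
`C^H(s,t) = (1/2)(t^{2H} + s^{2H} - |t-s|^{2H})`. -/
noncomputable def fbmCov (H : ℝ) : ℝ × ℝ → ℝ :=
  fun x => (x.2 ^ (2 * H) + x.1 ^ (2 * H) - |x.2 - x.1| ^ (2 * H)) / 2


private lemma dis12 : Disjoint (Set.Ioo (0:ℝ) 1) (Set.Ioo (1:ℝ) 2) :=
  Set.disjoint_left.mpr fun x hx hx' => absurd (hx.2.trans hx'.1) (lt_irrefl x)

private lemma dis21 : Disjoint (Set.Ioo (1:ℝ) 2) (Set.Ioo (0:ℝ) 1) := dis12.symm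

private lemma odisL {Q Q' : Rect} (h : Disjoint (Set.Ioo Q.a Q.b) (Set.Ioo Q'.a Q'.b)) :
    Disjoint Q.openSet Q'.openSet :=
  Set.disjoint_left.mpr fun x hx hx' => Set.disjoint_left.mp h hx.1 hx'.1

private lemma odisR {Q Q' : Rect} (h : Disjoint (Set.Ioo Q.c Q.d) (Set.Ioo Q'.c Q'.d)) :
    Disjoint Q.openSet Q'.openSet :=
  Set.disjoint_left.mpr fun x hx hx' => Set.disjoint_left.mp h hx.2 hx'.2

/-- for `H ∈ (0,1/2)` there is no super-additive map `ω` on rectangles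
in `[0,2]²`, vanishing on degenerate rectangles, dominating `|C^H(R)|^{1/(2H)}`, and
satisfying `ω([s,t]²) = C·(t-s)` for some constant `C`. -/
theorem no_2D_control_for_fbmCov (H : ℝ) (hH0 : 0 < H) (hH : H < 1 / 2) :
    ¬ ∃ (ω : Rect → ℝ) (C : ℝ),
        (∀ R : Rect, R.Valid → R.toSet ⊆ (Rect.mk 0 2 0 2).toSet →
          ∀ P : Finset Rect, IsPartition R P → ∑ Q ∈ P, ω Q ≤ ω R) ∧
        (∀ R : Rect, R.Valid → (R.a = R.b ∨ R.c = R.d) → ω R = 0) ∧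
        (∀ R : Rect, R.Valid → R.toSet ⊆ (Rect.mk 0 2 0 2).toSet →
          |Rect.inc (fbmCov H) R| ^ (1 / (2 * H)) ≤ ω R) ∧
        (∀ s t : ℝ, 0 ≤ s → s ≤ t → t ≤ 2 → ω (Rect.mk s t s t) = C * (t - s)) := by
  rintro ⟨ω, C, hsup, hdeg, hdom, hdiag⟩
  set Q1 : Rect := ⟨0, 1, 0, 1⟩ with hQ1
  set Q2 : Rect := ⟨1, 2, 1, 2⟩ with hQ2
  set R1 : Rect := ⟨0, 1, 1, 2⟩ with hR1
  set R2 : Rect := ⟨1, 2, 0, 1⟩ with hR2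
  set big : Rect := ⟨0, 2, 0, 2⟩ with hbig
  have hbigsub : big.toSet ⊆ (Rect.mk 0 2 0 2).toSet := le_refl _
  have hsubset : ∀ Q : Rect, 0 ≤ Q.a → Q.b ≤ 2 → 0 ≤ Q.c → Q.d ≤ 2 →
      Q.toSet ⊆ (Rect.mk 0 2 0 2).toSet := by
    intro Q h1 h2 h3 h4
    exact Set.prod_mono (Set.Icc_subset_Icc h1 h2) (Set.Icc_subset_Icc h3 h4)
  have hP : IsPartition big {Q1, Q2, R1, R2} := by
    refine ⟨?_, ?_, ?_⟩
    · intro Q hQ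
      simp only [Finset.mem_insert, Finset.mem_singleton] at hQ
      rcases hQ with rfl | rfl | rfl | rfl <;> exact ⟨by norm_num, by norm_num⟩
    · intro Q hQ Q' hQ' hne
      simp only [Finset.coe_insert, Finset.coe_singleton, Set.mem_insert_iff,
        Set.mem_singleton_iff] at hQ hQ'
      rcases hQ with rfl | rfl | rfl | rfl <;> rcases hQ' with rfl | rfl | rfl | rfl <;>
        first
          | exact absurd rfl hne
          | exact odisL dis12
          | exact odisL dis21
          | exact odisR dis12
          | exact odisR dis21
    · ext ⟨x, y⟩
      simp only [Finset.mem_insert, Finset.mem_singleton, Set.mem_iUnion, Rect.toSet,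
        Set.mem_prod, Set.mem_Icc, exists_prop]
      constructor
      · rintro ⟨Q, hQ, hx, hy⟩
        rcases hQ with rfl | rfl | rfl | rfl <;>
          simp only [hQ1, hQ2, hR1, hR2] at hx hy <;>
          exact ⟨⟨by linarith [hx.1], by linarith [hx.2]⟩, ⟨by linarith [hy.1], by linarith [hy.2]⟩⟩
      · rintro ⟨⟨hx0, hx2⟩, ⟨hy0, hy2⟩⟩
        rcases le_or_gt x 1 with hx1 | hx1 <;> rcases le_or_gt y 1 with hy1 | hy1
        · exact ⟨Q1, Or.inl rfl, ⟨hx0, hx1⟩, ⟨hy0, hy1⟩⟩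
        · exact ⟨R1, Or.inr (Or.inr (Or.inl rfl)), ⟨hx0, hx1⟩, ⟨hy1.le, hy2⟩⟩
        · exact ⟨R2, Or.inr (Or.inr (Or.inr rfl)), ⟨hx1.le, hx2⟩, ⟨hy0, hy1⟩⟩
        · exact ⟨Q2, Or.inr (Or.inl rfl), ⟨hx1.le, hx2⟩, ⟨hy1.le, hy2⟩⟩
  -- sum over the partition
  have hne12 : Q1 ≠ Q2 := by simp [hQ1, hQ2, Rect.mk.injEq]
  have hne1R1 : Q1 ≠ R1 := by simp [hQ1, hR1, Rect.mk.injEq]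
  have hne1R2 : Q1 ≠ R2 := by simp [hQ1, hR2, Rect.mk.injEq]
  have hne2R1 : Q2 ≠ R1 := by simp [hQ2, hR1, Rect.mk.injEq]
  have hne2R2 : Q2 ≠ R2 := by simp [hQ2, hR2, Rect.mk.injEq]
  have hneR12 : R1 ≠ R2 := by simp [hR1, hR2, Rect.mk.injEq]
  have hsum : ∑ Q ∈ ({Q1, Q2, R1, R2} : Finset Rect), ω Q = ω Q1 + ω Q2 + ω R1 + ω R2 := by
    rw [Finset.sum_insert (by simp [hne12, hne1R1, hne1R2]),
        Finset.sum_insert (by simp [hne2R1, hne2R2]),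
        Finset.sum_insert (by simp [hneR12]), Finset.sum_singleton]
    ring
  have hbigval : ω big = C * 2 := by
    have h := hdiag 0 2 le_rfl (by norm_num) le_rfl
    rw [hbig]; linarith
  have hQ1val : ω Q1 = C := by
    have h := hdiag 0 1 le_rfl (by norm_num) (by norm_num)
    rw [hQ1]; linarith
  have hQ2val : ω Q2 = C := by
    have h := hdiag 1 2 (by norm_num) (by norm_num) le_rfl
    rw [hQ2]; linarith
  have hsuper := hsup big ⟨by norm_num, by norm_num⟩ hbigsub _ hP
  rw [hsum] at hsuper
  -- compute the increment
  have h2H : (0:ℝ) < 2 * H := by linarith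
  have hzr : (0:ℝ) ^ (2 * H) = 0 := Real.zero_rpow h2H.ne'
  have hone : (1:ℝ) ^ (2 * H) = 1 := Real.one_rpow _
  have hinc1 : Rect.inc (fbmCov H) R1 = (2:ℝ) ^ (2 * H) / 2 - 1 := by
    simp only [hR1, Rect.inc, fbmCov]
    norm_num [hzr, hone, abs_of_nonneg]
  have hinc2 : Rect.inc (fbmCov H) R2 = (2:ℝ) ^ (2 * H) / 2 - 1 := by
    simp only [hR2, Rect.inc, fbmCov]
    norm_num [hzr, hone, abs_of_nonneg]
  have hlt2 : (2:ℝ) ^ (2 * H) < 2 := by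
    have := Real.rpow_lt_rpow_of_exponent_lt (by norm_num : (1:ℝ) < 2) (by linarith : 2 * H < 1)
    simpa [Real.rpow_one] using this
  have habs : |Rect.inc (fbmCov H) R1| = 1 - (2:ℝ) ^ (2 * H) / 2 := by
    rw [hinc1, abs_of_nonpos (by linarith)]; ring
  have habs2 : |Rect.inc (fbmCov H) R2| = 1 - (2:ℝ) ^ (2 * H) / 2 := by
    rw [hinc2, abs_of_nonpos (by linarith)]; ring
  have hpos : (0:ℝ) < 1 - (2:ℝ) ^ (2 * H) / 2 := by linarith
  have hR1pos : 0 < ω R1 := by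
    have h := hdom R1 ⟨by norm_num, by norm_num⟩
      (hsubset R1 le_rfl (by norm_num) (by norm_num) le_rfl) 
    rw [habs] at h
    exact lt_of_lt_of_le (Real.rpow_pos_of_pos hpos _) h
  have hR2pos : 0 < ω R2 := by
    have h := hdom R2 ⟨by norm_num, by norm_num⟩
      (hsubset R2 (by norm_num) le_rfl le_rfl (by norm_num)) 
    rw [habs2] at h
    exact lt_of_lt_of_le (Real.rpow_pos_of_pos hpos _) h
  linarith [hsuper, hbigval, hQ1val, hQ2val]
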